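/- Suppose 1/2 < q_B < q_A < 1 and w ∈ [0,1). Then the equilibrium vote probabilities converge to their limit at rate 1/N: there exists a constant C > 0 such that for all N ≥ N*(w), |q_A·σ*_N(w) − q_A/(1 + q_A − q_B)| ≤ C/N, and equivalently |σ*_N(w) − 1/(1 + q_A − q_B)| ≤ C/N. -/

import Mathlib

/-- `ψ(w) = (1−w)(1−q_B)/(q_A + w(1−q_B))`. -/
noncomputable def psi (qA qB w : ℝ) : ℝ := (1 - w) * (1 - qB) / (qA + w * (1 - qB))

/-- `N*(w) = ⌈ log ψ(w) / log (q_A(1−q_A)/(q_B(1−q_B))) ⌉`. -/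
noncomputable def Nstar (qA qB w : ℝ) : ℤ :=
  ⌈Real.log (psi qA qB w) / Real.log (qA * (1 - qA) / (qB * (1 - qB)))⌉

/-- `σ*_N(w) = (q_A − ψ(w)^{1/N}(1−q_B)) / (q_A² − ψ(w)^{1/N}(1−q_B)²)`. -/
noncomputable def sigmaStar (N : ℕ) (qA qB w : ℝ) : ℝ :=
  (qA - psi qA qB w ^ ((1 : ℝ) / N) * (1 - qB)) /
    (qA ^ 2 - psi qA qB w ^ ((1 : ℝ) / N) * (1 - qB) ^ 2)

/-- The equilibrium vote probabilities converge to their limits at rate `1/N`: there is a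
constant `C > 0` such that for all `N ≥ N*(w)`,
`|q_A σ*_N(w) − q_A/(1+q_A−q_B)| ≤ C/N` and `|σ*_N(w) − 1/(1+q_A−q_B)| ≤ C/N`. -/
theorem sigmaStar_rate_of_convergence (qA qB w : ℝ)
    (hqB : 1 / 2 < qB) (hqBA : qB < qA) (hqA : qA < 1)
    (hw0 : 0 ≤ w) (hw1 : w < 1) :
    ∃ C : ℝ, 0 < C ∧ ∀ N : ℕ, Nstar qA qB w ≤ (N : ℤ) →
      |qA * sigmaStar N qA qB w - qA / (1 + qA - qB)| ≤ C / N ∧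
      |sigmaStar N qA qB w - 1 / (1 + qA - qB)| ≤ C / N := by

  have hb0 : (0:ℝ) < 1 - qB := by linarith
  have hbq : 1 - qB < qA := by linarith
  have hA0 : (0:ℝ) < qA := by linarith
  have hsum : (0:ℝ) < qA + (1 - qB) := by linarith
  have hd2 : (0:ℝ) < qA ^ 2 - (1 - qB) ^ 2 := by nlinarith
  have hψ0 : 0 < psi qA qB w := by
    unfold psi; apply div_pos; nlinarith; nlinarith
  have hψ1 : psi qA qB w < 1 := by
    unfold psi
    rw [div_lt_one (by nlinarith)]
    nlinarith
  have hlog : Real.log (psi qA qB w) < 0 := Real.log_neg hψ0 hψ1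
  set L : ℝ := -Real.log (psi qA qB w) with hL
  have hL0 : 0 < L := by rw [hL]; linarith
  set C : ℝ := L * (qA * (1 - qB)) / ((qA ^ 2 - (1 - qB) ^ 2) * (qA + (1 - qB))) with hC
  have hC0 : 0 < C := by rw [hC]; positivity
  refine ⟨C, hC0, ?_⟩
  intro N _
  have hmain : |sigmaStar N qA qB w - 1 / (1 + qA - qB)| ≤ C / N := by
    rcases Nat.eq_zero_or_pos N with h0 | hpos
    · subst h0
      have hzero : sigmaStar 0 qA qB w - 1 / (1 + qA - qB) = 0 := by
        unfold sigmaStar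
        rw [Nat.cast_zero, div_zero, Real.rpow_zero, one_mul, one_mul]
        rw [sub_eq_zero]
        rw [div_eq_div_iff (by nlinarith) (by nlinarith)]
        ring
      rw [hzero, Nat.cast_zero, div_zero, abs_zero]
    · have hNR : (0:ℝ) < (N:ℝ) := by exact_mod_cast hpos
      set t := psi qA qB w ^ ((1:ℝ) / N) with htdef
      have ht0 : 0 < t := Real.rpow_pos_of_pos hψ0 _
      have ht1 : t ≤ 1 := Real.rpow_le_one hψ0.le hψ1.le (by positivity)
      have hdent : 0 < qA ^ 2 - t * (1 - qB) ^ 2 := by nlinarith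
      have hid : sigmaStar N qA qB w - 1 / (1 + qA - qB)
          = qA * (1 - qB) * (1 - t) / ((qA ^ 2 - t * (1 - qB) ^ 2) * (qA + (1 - qB))) := by
        have hne1 : (1:ℝ) + qA - qB ≠ 0 := ne_of_gt (by linarith)
        have hne2 : qA ^ 2 - t * (1 - qB) ^ 2 ≠ 0 := ne_of_gt hdent
        have hne3 : qA + (1 - qB) ≠ 0 := ne_of_gt hsum
        unfold sigmaStar
        rw [← htdef]
        field_simp
        ring
      have hgap : 1 - t ≤ L / N := by
        have h1 : Real.log (psi qA qB w) * ((1:ℝ) / N) + 1 ≤ t := by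
          rw [htdef, Real.rpow_def_of_pos hψ0]
          exact Real.add_one_le_exp _
        have h2 : L / N = -(Real.log (psi qA qB w) * ((1:ℝ) / N)) := by
          rw [hL]; field_simp
        linarith
      have hnn : 0 ≤ 1 - t := by linarith
      rw [hid, abs_of_nonneg (div_nonneg (by positivity) (le_of_lt (mul_pos hdent hsum)))]
      have hCN : C / N = qA * (1 - qB) * (L / N) / ((qA ^ 2 - (1 - qB) ^ 2) * (qA + (1 - qB))) := by
        rw [hC]; field_simp
      rw [hCN]
      apply div_le_div₀ (by positivity)
      · exact mul_le_mul_of_nonneg_left hgap (by positivity)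
      · positivity
      · apply mul_le_mul_of_nonneg_right _ (le_of_lt hsum)
        have h3 : t * (1 - qB) ^ 2 ≤ (1 - qB) ^ 2 :=
          mul_le_of_le_one_left (sq_nonneg _) ht1
        linarith
  refine ⟨?_, hmain⟩
  have h1 : qA * sigmaStar N qA qB w - qA / (1 + qA - qB)
      = qA * (sigmaStar N qA qB w - 1 / (1 + qA - qB)) := by ring
  rw [h1, abs_mul, abs_of_pos hA0]
  calc qA * |sigmaStar N qA qB w - 1 / (1 + qA - qB)|
      ≤ 1 * |sigmaStar N qA qB w - 1 / (1 + qA - qB)| := by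
        apply mul_le_mul_of_nonneg_right (le_of_lt hqA) (abs_nonneg _)
    _ = |sigmaStar N qA qB w - 1 / (1 + qA - qB)| := one_mul _
    _ ≤ C / N := hmain
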